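/- Let c* be the Euclidean projection of c ∈ ℝ^{m+1} onto the cone Φ̄ = {d ∈ ℝ^{m+1} : d_i ≤ 0 for all i ∈ [m], Σ_{i=0}^m d_i = 0}, and let I = {i ∈ [m] : c*_i < 0}. Then there is a constant δ* ∈ ℝ with c*_i = c_i − δ* for all i ∈ {0} ∪ I, and c_k − δ* ≥ 0 for all k ∈ [m] \ I. -/

import Mathlib

/-- Key perturbation inequality: moving mass `t` from coordinate 0 to coordinate `i`
(staying feasible) gives `0 ≤ t*t - t*a` where `a = (c i - cstar i) - (c 0 - cstar 0)`. -/
lemma key_ineq (m : ℕ) (c cstar : EuclideanSpace ℝ (Fin (m + 1)))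
    (hmem : (∀ i : Fin (m + 1), i ≠ 0 → cstar i ≤ 0) ∧ ∑ i, cstar i = 0)
    (hproj : ∀ d : EuclideanSpace ℝ (Fin (m + 1)),
      ((∀ i : Fin (m + 1), i ≠ 0 → d i ≤ 0) ∧ ∑ i, d i = 0) → ‖c - cstar‖ ≤ ‖c - d‖)
    (i : Fin (m + 1)) (hi : i ≠ 0) (t : ℝ) (ht : cstar i + t ≤ 0) :
    0 ≤ t * t - t * ((c i - cstar i) - (c 0 - cstar 0)) := by
  set w : Fin (m + 1) → ℝ :=
    fun j => (if j = i then t else 0) - (if j = 0 then t else 0) with hw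
  set d : EuclideanSpace ℝ (Fin (m + 1)) := WithLp.toLp 2 (fun j => cstar j + w j) with hd
  have hwsum : ∑ j, w j = 0 := by
    simp [hw, Finset.sum_sub_distrib]
  have hdmem : (∀ j : Fin (m + 1), j ≠ 0 → d j ≤ 0) ∧ ∑ j, d j = 0 := by
    constructor
    · intro j hj
      simp only [hd, hw]
      by_cases hji : j = i
      · subst hji; simpa [hj] using ht
      · simp only [hji, hj, if_false]
        simpa using hmem.1 j hj
    · have : ∑ j, d j = (∑ j, cstar j) + ∑ j, w j := by
        simp [hd, Finset.sum_add_distrib]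
      rw [this, hmem.2, hwsum, add_zero]
  have hn := hproj d hdmem
  have hsq : ‖c - cstar‖ * ‖c - cstar‖ ≤ ‖c - d‖ * ‖c - d‖ :=
    mul_self_le_mul_self (norm_nonneg _) hn
  rw [← real_inner_self_eq_norm_mul_norm, ← real_inner_self_eq_norm_mul_norm] at hsq
  have hexp : ∀ x y : EuclideanSpace ℝ (Fin (m + 1)),
      (inner ℝ (x - y) (x - y) : ℝ) = ∑ j, (x j - y j) * (x j - y j) := by
    intro x y
    rw [PiLp.inner_apply]
    refine Finset.sum_congr rfl fun j _ => ?_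
    simp [RCLike.inner_apply, PiLp.sub_apply, sq]
  rw [hexp, hexp] at hsq
  have hpt : ∀ j, (c j - d j) * (c j - d j)
      = (c j - cstar j) * (c j - cstar j) - 2 * (c j - cstar j) * w j + w j * w j := by
    intro j; simp only [hd]; ring_nf
  have hsum1 : ∑ j, (c j - cstar j) * w j
      = (c i - cstar i) * t - (c 0 - cstar 0) * t := by
    simp [hw, mul_sub, Finset.sum_sub_distrib, mul_ite, mul_zero]
  have hsum2 : ∑ j, w j * w j = t * t + t * t := by
    have : ∀ j, w j * w j = (if j = i then t * t else 0) + (if j = 0 then t * t else 0) := by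
      intro j
      simp only [hw]
      by_cases hji : j = i
      · subst hji; simp [hi]
      · by_cases hj0 : j = 0 <;> simp [hji, hj0, Ne.symm hi]
    simp [this, Finset.sum_add_distrib]
  have hsumall : ∑ j, (c j - d j) * (c j - d j)
      = ∑ j, (c j - cstar j) * (c j - cstar j)
        - 2 * ((c i - cstar i) * t - (c 0 - cstar 0) * t) + (t * t + t * t) := by
    calc ∑ j, (c j - d j) * (c j - d j)
        = ∑ j, ((c j - cstar j) * (c j - cstar j) - 2 * (c j - cstar j) * w j + w j * w j) :=
          Finset.sum_congr rfl fun j _ => hpt j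
      _ = ∑ j, (c j - cstar j) * (c j - cstar j)
            - 2 * (∑ j, (c j - cstar j) * w j) + ∑ j, w j * w j := by
          rw [Finset.sum_add_distrib, Finset.sum_sub_distrib, Finset.mul_sum]
          congr 1
          refine congrArg _ ?_
          exact Finset.sum_congr rfl fun j _ => by ring
      _ = _ := by rw [hsum1, hsum2]
  rw [hsumall] at hsq
  nlinarith [hsq]

theorem projection_characterization (m : ℕ) (c cstar : EuclideanSpace ℝ (Fin (m + 1)))
    (hmem : (∀ i : Fin (m + 1), i ≠ 0 → cstar i ≤ 0) ∧ ∑ i, cstar i = 0)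
    (hproj : ∀ d : EuclideanSpace ℝ (Fin (m + 1)),
      ((∀ i : Fin (m + 1), i ≠ 0 → d i ≤ 0) ∧ ∑ i, d i = 0) → ‖c - cstar‖ ≤ ‖c - d‖) :
    ∃ δstar : ℝ,
      (∀ i : Fin (m + 1), (i = 0 ∨ cstar i < 0) → cstar i = c i - δstar) ∧
      (∀ k : Fin (m + 1), k ≠ 0 → ¬ cstar k < 0 → 0 ≤ c k - δstar) := by
  refine ⟨c 0 - cstar 0, ?_, ?_⟩
  · intro i hcase
    by_cases hi : i = 0
    · subst hi; ring
    replace hcase : cstar i < 0 := hcase.resolve_left hi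
    have hneg := hcase
    set a : ℝ := (c i - cstar i) - (c 0 - cstar 0) with ha
    have h1 : a ≤ 0 := by
      by_contra h
      push_neg at h
      have hε : (0:ℝ) < -cstar i := by linarith
      set t : ℝ := min (a / 2) (-cstar i) with htdef
      have htpos : 0 < t := lt_min (by linarith) hε
      have htle : cstar i + t ≤ 0 := by
        have := min_le_right (a / 2) (-cstar i); simp only [htdef]; linarith
      have hk := key_ineq m c cstar hmem hproj i hi t htle
      have hta : t ≤ a / 2 := min_le_left _ _
      nlinarith
    have h2 : 0 ≤ a := by
      by_contra h
      push_neg at h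
      have hk := key_ineq m c cstar hmem hproj i hi (a / 2) (by linarith)
      nlinarith
    have : a = 0 := le_antisymm h1 h2
    simp only [ha] at this
    linarith
  · intro k hk hknn
    have hk0 : cstar k = 0 := le_antisymm (hmem.1 k hk) (not_lt.mp hknn)
    set a : ℝ := (c k - cstar k) - (c 0 - cstar 0) with ha
    have h2 : 0 ≤ a := by
      by_contra h
      push_neg at h
      have hkey := key_ineq m c cstar hmem hproj k hk (a / 2) (by rw [hk0]; linarith)
      nlinarith
    simp only [ha, hk0] at h2 ⊢
    linarith
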